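/- For all y ≥ 1 and 0 < r₀ ≤ 1: 1 − Σ_{k∈ℤ}[(r₀+2ky)/r₀]·exp(−((r₀+2ky)²−r₀²)/2) ≤ 8 Σ_{k=1}^∞ k²y² e^{2ky} e^{−2k²y²}, using that sinh(u)/u ≤ e^u for u ≥ 0. -/

import Mathlib

open Real

private lemma npow_bound (n : ℕ) : ((n : ℝ) + 1) ≤ 2 ^ n := by
  induction n with
  | zero => norm_num
  | succ m ih =>
    have h2 : (1:ℝ) ≤ 2 ^ m := one_le_pow₀ (by norm_num : (1:ℝ) ≤ 2)
    push_cast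
    rw [pow_succ]
    push_cast at ih
    nlinarith

private lemma geom_summable (C : ℝ) : Summable (fun n : ℕ => C * (4 * Real.exp (-2)) ^ n) := by
  apply Summable.mul_left
  apply summable_geometric_of_lt_one (by positivity)
  have h2 : Real.exp 2 = Real.exp 1 * Real.exp 1 := by rw [← Real.exp_add]; norm_num
  have h : (4:ℝ) < Real.exp 2 := by nlinarith [Real.exp_one_gt_d9]
  rw [Real.exp_neg, ← div_eq_mul_inv]
  rw [div_lt_one (Real.exp_pos 2)]
  exact h

private lemma helper2 (n : ℕ) (c : ℝ) (hc : c ≤ -(2:ℝ) * n) :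
    ((n:ℝ) + 1) ^ 2 * Real.exp c ≤ (4 * Real.exp (-2)) ^ n := by
  have h1 := npow_bound n
  have h2 : ((n:ℝ) + 1) ^ 2 ≤ 4 ^ n := by
    have : ((2:ℝ) ^ n) ^ 2 = 4 ^ n := by
      rw [← pow_mul, mul_comm, pow_mul]
      norm_num
    nlinarith [n.cast_nonneg (α := ℝ)]
  have h3 : (4 * Real.exp (-2)) ^ n = 4 ^ n * Real.exp (-(2:ℝ) * n) := by
    rw [mul_pow, ← Real.exp_nat_mul]
    ring_nf
  rw [h3]
  have h4 : Real.exp c ≤ Real.exp (-(2:ℝ) * n) := Real.exp_le_exp.2 hc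
  have h5 : (0:ℝ) < Real.exp c := Real.exp_pos c
  nlinarith [Real.exp_pos (-(2:ℝ) * n), sq_nonneg ((n:ℝ)+1)]

private lemma helper1 (n : ℕ) (c : ℝ) (hc : c ≤ -(2:ℝ) * n) :
    ((n:ℝ) + 1) * Real.exp c ≤ (4 * Real.exp (-2)) ^ n := by
  have := helper2 n c hc
  have h1 : ((n:ℝ) + 1) ≤ ((n:ℝ) + 1) ^ 2 := by nlinarith [n.cast_nonneg (α := ℝ)]
  nlinarith [Real.exp_pos c]

private lemma eb1 (r₀ y A : ℝ) (n : ℕ) (hr0 : 0 < r₀) (hy : 1 ≤ y) (hA : A = (n:ℝ) + 1) :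
    -(((r₀ + 2*A*y)^2 - r₀^2)/2) ≤ -2*(n:ℝ) := by
  have hA1 : (1:ℝ) ≤ A := by simp [hA]
  have hy2 : (1:ℝ) ≤ y^2 := by nlinarith
  have hAn : (n:ℝ) ≤ A^2*y^2 := by
    nlinarith [mul_nonneg (sub_nonneg.2 hy2) (sq_nonneg A),
      mul_nonneg (sub_nonneg.2 hA1) (by linarith : (0:ℝ) ≤ A)]
  nlinarith [mul_nonneg (mul_nonneg hr0.le (by linarith : (0:ℝ) ≤ A)) (by linarith : (0:ℝ) ≤ y)]

private lemma eb2 (r₀ y A : ℝ) (n : ℕ) (_hr0 : 0 < r₀) (hr1 : r₀ ≤ 1) (hy : 1 ≤ y)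
    (hA : A = (n:ℝ) + 1) : -(((r₀ - 2*A*y)^2 - r₀^2)/2) ≤ -2*(n:ℝ) := by
  have hA1 : (1:ℝ) ≤ A := by simp [hA]
  have hAy : (n:ℝ) + 1 ≤ A*y := by nlinarith
  nlinarith [sq_nonneg (A*y - 1), mul_nonneg (sub_nonneg.2 hr1)
    (by nlinarith : (0:ℝ) ≤ A*y)]

private lemma eb3 (y A : ℝ) (n : ℕ) (hy : 1 ≤ y) (hA : A = (n:ℝ) + 1) :
    2*A*y + -2*A^2*y^2 ≤ -2*(n:ℝ) := by
  have := eb2 1 y A n one_pos le_rfl hy hA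
  nlinarith [this]

set_option maxHeartbeats 2000000 in
theorem stmt_14 (r₀ : ℝ) (hr : r₀ ∈ Set.Ioc (0 : ℝ) 1) (y : ℝ) (hy : 1 ≤ y) :
    1 - ∑' k : ℤ, ((r₀ + 2 * k * y) / r₀) *
        Real.exp (-(((r₀ + 2 * k * y) ^ 2 - r₀ ^ 2) / 2))
      ≤ 8 * ∑' k : ℕ, ((k + 1 : ℝ) ^ 2 * y ^ 2) * Real.exp (2 * (k + 1) * y) *
          Real.exp (-2 * (k + 1) ^ 2 * y ^ 2) := by
  obtain ⟨hr0, hr1⟩ := hr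
  have hy0 : (0:ℝ) < y := lt_of_lt_of_le one_pos hy
  set f : ℤ → ℝ := fun k => ((r₀ + 2 * k * y) / r₀) *
      Real.exp (-(((r₀ + 2 * k * y) ^ 2 - r₀ ^ 2) / 2)) with hfdef
  set g : ℕ → ℝ := fun k => ((k + 1 : ℝ) ^ 2 * y ^ 2) * Real.exp (2 * (k + 1) * y) *
      Real.exp (-2 * (k + 1) ^ 2 * y ^ 2) with hgdef
  -- norm bound for positive indices
  have hbp : ∀ n : ℕ, ‖f ((n : ℤ) + 1)‖ ≤ (4 * y / r₀) * (4 * Real.exp (-2)) ^ n := by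
    intro n
    have hcoef : 0 < (r₀ + 2 * ((n:ℝ) + 1) * y) / r₀ := by positivity
    have h1 : f ((n : ℤ) + 1) = ((r₀ + 2 * ((n:ℝ) + 1) * y) / r₀) *
        Real.exp (-(((r₀ + 2 * ((n:ℝ) + 1) * y) ^ 2 - r₀ ^ 2) / 2)) := by
      simp only [hfdef]
      push_cast
      ring_nf
    rw [h1, Real.norm_eq_abs, abs_mul, abs_of_pos hcoef, abs_of_pos (Real.exp_pos _)]
    have hexp : Real.exp (-(((r₀ + 2 * ((n:ℝ) + 1) * y) ^ 2 - r₀ ^ 2) / 2))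
        ≤ Real.exp (-(2:ℝ) * n) := by
      apply Real.exp_le_exp.2
      have := eb1 r₀ y ((n:ℝ) + 1) n hr0 hy rfl
      linarith
    have hny : (0:ℝ) ≤ (n:ℝ) * y := mul_nonneg (n.cast_nonneg) hy0.le
    have hcoef2 : (r₀ + 2 * ((n:ℝ) + 1) * y) / r₀ ≤ 4 * ((n:ℝ) + 1) * y / r₀ := by
      rw [div_le_div_iff_of_pos_right hr0]
      nlinarith
    calc (r₀ + 2 * ((n:ℝ) + 1) * y) / r₀ *
          Real.exp (-(((r₀ + 2 * ((n:ℝ) + 1) * y) ^ 2 - r₀ ^ 2) / 2))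
        ≤ (4 * ((n:ℝ) + 1) * y / r₀) * Real.exp (-(2:ℝ) * n) :=
          mul_le_mul hcoef2 hexp (Real.exp_pos _).le (by positivity)
      _ = (4 * y / r₀) * (((n:ℝ) + 1) * Real.exp (-(2:ℝ) * n)) := by ring
      _ ≤ (4 * y / r₀) * (4 * Real.exp (-2)) ^ n :=
          mul_le_mul_of_nonneg_left (helper1 n _ le_rfl) (by positivity)
  -- norm bound for negative indices
  have hbm : ∀ n : ℕ, ‖f (-((n : ℤ) + 1))‖ ≤ (2 * y / r₀) * (4 * Real.exp (-2)) ^ n := by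
    intro n
    have hny : (0:ℝ) ≤ (n:ℝ) * y := mul_nonneg (n.cast_nonneg) hy0.le
    have h1 : f (-((n : ℤ) + 1)) = ((r₀ - 2 * ((n:ℝ) + 1) * y) / r₀) *
        Real.exp (-(((r₀ - 2 * ((n:ℝ) + 1) * y) ^ 2 - r₀ ^ 2) / 2)) := by
      simp only [hfdef]
      push_cast
      ring_nf
    rw [h1, Real.norm_eq_abs, abs_mul, abs_of_pos (Real.exp_pos _), abs_div,
      abs_of_pos hr0]
    have habs : |r₀ - 2 * ((n:ℝ) + 1) * y| ≤ 2 * ((n:ℝ) + 1) * y := by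
      rw [abs_le]
      constructor <;> nlinarith
    have hexp : Real.exp (-(((r₀ - 2 * ((n:ℝ) + 1) * y) ^ 2 - r₀ ^ 2) / 2))
        ≤ Real.exp (-(2:ℝ) * n) := by
      apply Real.exp_le_exp.2
      have := eb2 r₀ y ((n:ℝ) + 1) n hr0 hr1 hy rfl
      linarith
    calc |r₀ - 2 * ((n:ℝ) + 1) * y| / r₀ *
          Real.exp (-(((r₀ - 2 * ((n:ℝ) + 1) * y) ^ 2 - r₀ ^ 2) / 2))
        ≤ (2 * ((n:ℝ) + 1) * y / r₀) * Real.exp (-(2:ℝ) * n) :=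
          mul_le_mul (by rw [div_le_div_iff_of_pos_right hr0]; exact habs) hexp
            (Real.exp_pos _).le (by positivity)
      _ = (2 * y / r₀) * (((n:ℝ) + 1) * Real.exp (-(2:ℝ) * n)) := by ring
      _ ≤ (2 * y / r₀) * (4 * Real.exp (-2)) ^ n :=
          mul_le_mul_of_nonneg_left (helper1 n _ le_rfl) (by positivity)
  -- bound for g
  have hbg : ∀ n : ℕ, ‖g n‖ ≤ (y ^ 2) * (4 * Real.exp (-2)) ^ n := by
    intro n
    have h1 : g n = ((n:ℝ) + 1) ^ 2 * y ^ 2 *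
        Real.exp (2 * ((n:ℝ) + 1) * y + -2 * ((n:ℝ) + 1) ^ 2 * y ^ 2) := by
      simp only [hgdef]
      rw [Real.exp_add]
      ring
    rw [h1, Real.norm_eq_abs, abs_of_pos (by positivity)]
    have hexp : Real.exp (2 * ((n:ℝ) + 1) * y + -2 * ((n:ℝ) + 1) ^ 2 * y ^ 2)
        ≤ Real.exp (-(2:ℝ) * n) := by
      apply Real.exp_le_exp.2
      have := eb3 y ((n:ℝ) + 1) n hy rfl
      linarith
    calc ((n:ℝ) + 1) ^ 2 * y ^ 2 * Real.exp (2 * ((n:ℝ) + 1) * y + -2 * ((n:ℝ) + 1) ^ 2 * y ^ 2)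
        ≤ ((n:ℝ) + 1) ^ 2 * y ^ 2 * Real.exp (-(2:ℝ) * n) :=
          mul_le_mul_of_nonneg_left hexp (by positivity)
      _ = y ^ 2 * (((n:ℝ) + 1) ^ 2 * Real.exp (-(2:ℝ) * n)) := by ring
      _ ≤ y ^ 2 * (4 * Real.exp (-2)) ^ n :=
          mul_le_mul_of_nonneg_left (helper2 n _ le_rfl) (by positivity)
  -- summabilities
  have hsump : Summable (fun n : ℕ => f ((n : ℤ) + 1)) :=
    Summable.of_norm_bounded (geom_summable (4 * y / r₀)) hbp
  have hsumm : Summable (fun n : ℕ => f (-((n : ℤ) + 1))) :=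
    Summable.of_norm_bounded (geom_summable (2 * y / r₀)) hbm
  have hsumg : Summable g :=
    Summable.of_norm_bounded (geom_summable (y ^ 2)) hbg
  have hsumN : Summable (fun n : ℕ => f (n : ℤ)) := by
    rw [← summable_nat_add_iff 1]
    simpa using hsump
  -- main pointwise inequality
  have hmain : ∀ n : ℕ, -(f ((n : ℤ) + 1) + f (-((n : ℤ) + 1))) ≤ 8 * g n := by
    intro n
    obtain ⟨a, ha⟩ : ∃ a : ℝ, a = 2 * ((n:ℝ) + 1) * y := ⟨_, rfl⟩
    have hny : (0:ℝ) ≤ (n:ℝ) * y := mul_nonneg (n.cast_nonneg) hy0.le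
    have ha2 : 2 ≤ a := by rw [ha]; nlinarith
    have ha0 : 0 < a := by linarith
    have h1 : f ((n : ℤ) + 1) = ((r₀ + a) / r₀) *
        (Real.exp (-(a ^ 2 / 2)) * Real.exp (-(r₀ * a))) := by
      rw [ha, ← Real.exp_add]
      simp only [hfdef]
      push_cast
      ring_nf
    have h2 : f (-((n : ℤ) + 1)) = ((r₀ - a) / r₀) *
        (Real.exp (-(a ^ 2 / 2)) * Real.exp (r₀ * a)) := by
      rw [ha, ← Real.exp_add]
      simp only [hfdef]
      push_cast
      ring_nf
    have hgn : g n = ((n:ℝ) + 1) ^ 2 * y ^ 2 *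
        Real.exp (2 * ((n:ℝ) + 1) * y + -2 * ((n:ℝ) + 1) ^ 2 * y ^ 2) := by
      simp only [hgdef]
      rw [Real.exp_add]
      ring
    have h3 : 8 * g n = 2 * a ^ 2 * (Real.exp a * Real.exp (-(a ^ 2 / 2))) := by
      rw [hgn, ha, ← Real.exp_add]
      ring_nf
    rw [h1, h2, h3]
    rw [show 2 * a ^ 2 * (Real.exp a * Real.exp (-(a ^ 2 / 2))) = 2 * a ^ 2 * Real.exp a * Real.exp (-(a ^ 2 / 2)) from by ring]
    obtain ⟨P, hP⟩ : ∃ P : ℝ, P = Real.exp (-(a ^ 2 / 2)) := ⟨_, rfl⟩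
    obtain ⟨Q, hQ⟩ : ∃ Q : ℝ, Q = Real.exp (r₀ * a) := ⟨_, rfl⟩
    obtain ⟨R, hR⟩ : ∃ R : ℝ, R = Real.exp (-(r₀ * a)) := ⟨_, rfl⟩
    obtain ⟨S, hS⟩ : ∃ S : ℝ, S = Real.exp a := ⟨_, rfl⟩
    rw [← hP, ← hQ, ← hR, ← hS]
    have hPp : 0 < P := hP ▸ Real.exp_pos _
    have hQp : 0 < Q := hQ ▸ Real.exp_pos _
    have hRp : 0 < R := hR ▸ Real.exp_pos _
    have hSp : 0 < S := hS ▸ Real.exp_pos _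
    have hQR : Q * R = 1 := by rw [hQ, hR, ← Real.exp_add]; simp
    have hQS : Q ≤ S := by
      rw [hQ, hS]
      apply Real.exp_le_exp.2
      nlinarith
    have hRR : 1 - 2 * (r₀ * a) ≤ R * R := by
      have h := Real.add_one_le_exp (-(2 * (r₀ * a)))
      have hre : Real.exp (-(2 * (r₀ * a))) = R * R := by
        rw [hR, ← Real.exp_add]; ring_nf
      rw [hre] at h
      linarith
    have hQRR : Q * (R * R) = R := by
      rw [show Q * (R * R) = (Q * R) * R from by ring, hQR, one_mul]
    have hkey : Q - R ≤ 2 * (r₀ * a) * Q := by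
      have h5 := mul_le_mul_of_nonneg_left hRR hQp.le
      rw [hQRR] at h5
      nlinarith [h5]
    have hrw : -((r₀ + a) / r₀ * (P * R) + (r₀ - a) / r₀ * (P * Q))
        = (-((r₀ + a) * (P * R) + (r₀ - a) * (P * Q))) / r₀ := by
      field_simp
    rw [hrw, div_le_iff₀ hr0]
    have step1 : a * (Q - R) ≤ a * (2 * (r₀ * a) * Q) :=
      mul_le_mul_of_nonneg_left hkey ha0.le
    have step2 : 2 * a ^ 2 * r₀ * Q ≤ 2 * a ^ 2 * r₀ * S :=
      mul_le_mul_of_nonneg_left hQS (by positivity)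
    have step3 : P * (a * (Q - R)) ≤ P * (2 * a ^ 2 * r₀ * S) := by
      apply mul_le_mul_of_nonneg_left _ hPp.le
      calc a * (Q - R) ≤ a * (2 * (r₀ * a) * Q) := step1
        _ = 2 * a ^ 2 * r₀ * Q := by ring
        _ ≤ 2 * a ^ 2 * r₀ * S := step2
    have step4 : 0 ≤ r₀ * P * (Q + R) :=
      mul_nonneg (mul_nonneg hr0.le hPp.le) (add_pos hQp hRp).le
    nlinarith [step3, step4]
  -- assemble
  have hf0 : f 0 = 1 := by
    simp [hfdef, div_self hr0.ne']
  have hsplit : ∑' k : ℤ, f k = (∑' n : ℕ, f (n : ℤ)) + ∑' n : ℕ, f (-((n : ℤ) + 1)) :=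
    tsum_of_nat_of_neg_add_one hsumN hsumm
  have hshift : ∑' n : ℕ, f (n : ℤ) = f 0 + ∑' n : ℕ, f ((n : ℤ) + 1) := by
    rw [hsumN.tsum_eq_zero_add]
    norm_num
  have hfinal : 1 - ∑' k : ℤ, f k = ∑' n : ℕ, -(f ((n : ℤ) + 1) + f (-((n : ℤ) + 1))) := by
    rw [hsplit, hshift, hf0, tsum_neg, hsump.tsum_add hsumm]
    ring
  rw [hfinal]
  calc ∑' n : ℕ, -(f ((n : ℤ) + 1) + f (-((n : ℤ) + 1)))
      ≤ ∑' n : ℕ, 8 * g n :=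
        Summable.tsum_le_tsum hmain ((hsump.add hsumm).neg) (hsumg.mul_left 8)
    _ = 8 * ∑' n : ℕ, g n := tsum_mul_left
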